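/- Let {γₙ} be a sequence of pairwise disjoint C² curves in ℝ², each parametrized over a common interval by arc length, with tangent slopes everywhere at most √b and curvature everywhere at most √b, and suppose γₙ converges pointwise to a function γ. Then the convergence is uniform in C¹, γ is a C¹ curve, and the slopes of its tangent directions are everywhere at most √b. -/

import Mathlib

open Set Filter

section aux
variable {E : Type*} [NormedAddCommGroup E] [NormedSpace ℝ E]

lemma aux_lip {F : ℝ → E} {K : ℝ} {s : Set ℝ} (hconv : Convex ℝ s)
    (hF : Differentiable ℝ F) (hbound : ∀ x ∈ s, ‖deriv F x‖ ≤ K) :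
    ∀ x ∈ s, ∀ y ∈ s, ‖F y - F x‖ ≤ K * |y - x| := by
  intro x hx y hy
  have := hconv.norm_image_sub_le_of_norm_hasDerivWithin_le
    (f' := deriv F) (fun z _ => (hF z).hasDerivAt.hasDerivWithinAt) hbound hx hy
  simpa [Real.norm_eq_abs] using this

lemma aux_taylor {h h' : ℝ → E} {M c d : ℝ} (hM : 0 ≤ M)
    (hd : ∀ x, HasDerivAt h (h' x) x)
    (hlip : ∀ x ∈ Icc c d, ∀ y ∈ Icc c d, ‖h' y - h' x‖ ≤ M * |y - x|)
    {s t : ℝ} (hs : s ∈ Icc c d) (ht : t ∈ Icc c d) :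
    ‖h t - h s - (t - s) • h' s‖ ≤ M * |t - s| * |t - s| := by
  have hsub : uIcc s t ⊆ Icc c d := uIcc_subset_Icc hs ht
  set φ : ℝ → E := fun x => h x - x • h' s with hφ
  have hdφ : ∀ x ∈ uIcc s t, HasDerivWithinAt φ (h' x - h' s) (uIcc s t) x := by
    intro x _
    have : HasDerivAt (fun y : ℝ => y • h' s) ((1:ℝ) • h' s) x := (hasDerivAt_id x).smul_const _
    rw [one_smul] at this
    exact ((hd x).sub this).hasDerivWithinAt
  have hbd : ∀ x ∈ uIcc s t, ‖h' x - h' s‖ ≤ M * |t - s| := by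
    intro x hx
    have h1 : ‖h' x - h' s‖ ≤ M * |x - s| := hlip s (hsub left_mem_uIcc) x (hsub hx)
    have h2 : |x - s| ≤ |t - s| := by
      rcases mem_uIcc.mp hx with ⟨h3, h4⟩ | ⟨h3, h4⟩ <;>
        · rw [abs_le]
          constructor <;> nlinarith [le_abs_self (t - s), neg_abs_le (t - s)]
    exact h1.trans (by nlinarith)
  have key := Convex.norm_image_sub_le_of_norm_hasDerivWithin_le hdφ hbd (convex_uIcc s t)
    left_mem_uIcc right_mem_uIcc
  have : φ t - φ s = h t - h s - (t - s) • h' s := by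
    rw [hφ]; simp only [sub_smul]; abel
  rw [this] at key
  simpa [Real.norm_eq_abs] using key

lemma aux_unif {F : ℕ → ℝ → E} {G : ℝ → E} {c d K : ℝ} (hcd : c < d) (hK : 0 ≤ K)
    (hlip : ∀ n, ∀ x ∈ Icc c d, ∀ y ∈ Icc c d, ‖F n y - F n x‖ ≤ K * |y - x|)
    (hpt : ∀ x ∈ Icc c d, Tendsto (fun n => F n x) atTop (nhds (G x))) :
    TendstoUniformlyOn F G atTop (Icc c d) := by
  have hdc : (0:ℝ) < d - c := by linarith
  have hGlip : ∀ x ∈ Icc c d, ∀ y ∈ Icc c d, ‖G y - G x‖ ≤ K * |y - x| := by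
    intro x hx y hy
    have h1 : Tendsto (fun n => ‖F n y - F n x‖) atTop (nhds ‖G y - G x‖) :=
      ((hpt y hy).sub (hpt x hx)).norm
    exact le_of_tendsto h1 (Eventually.of_forall fun n => hlip n x hx y hy)
  rw [Metric.tendstoUniformlyOn_iff]
  intro ε hε
  obtain ⟨N, hN⟩ : ∃ N : ℕ, 0 < N ∧ K * ((d - c) / N) < ε / 4 := by
    refine ⟨⌈4 * K * (d - c) / ε⌉₊ + 1, Nat.succ_pos _, ?_⟩
    have hNpos : (0:ℝ) < ((⌈4 * K * (d - c) / ε⌉₊ + 1 : ℕ) : ℝ) := by positivity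
    have hx : 4 * K * (d - c) / ε < ((⌈4 * K * (d - c) / ε⌉₊ + 1 : ℕ) : ℝ) := by
      push_cast
      exact lt_of_le_of_lt (Nat.le_ceil _) (by linarith)
    rw [div_lt_iff₀ hε] at hx
    rw [← mul_div_assoc, div_lt_iff₀ hNpos]
    nlinarith
  obtain ⟨hNpos, hNsmall⟩ := hN
  set δ : ℝ := (d - c) / N with hδdef
  have hδpos : 0 < δ := by positivity
  set p : ℕ → ℝ := fun i => c + i * δ with hp
  have hpmem : ∀ i ≤ N, p i ∈ Icc c d := by
    intro i hi
    constructor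
    · have : (0:ℝ) ≤ i * δ := by positivity
      simp only [hp]; linarith
    · have : (i:ℝ) * δ ≤ N * δ := by
        have : (i:ℝ) ≤ N := by exact_mod_cast hi
        nlinarith
      have hNδ : (N:ℝ) * δ = d - c := by
        rw [hδdef]; field_simp [show (N:ℝ) ≠ 0 by exact_mod_cast hNpos.ne']
      simp only [hp]; linarith
  have hev : ∀ᶠ n in atTop, ∀ i ∈ Finset.range (N+1), dist (F n (p i)) (G (p i)) < ε/4 := by
    rw [eventually_all_finset (Finset.range (N+1))]
    intro i hi
    have hi' : i ≤ N := by
      simp only [Finset.mem_range] at hi; omega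
    exact Metric.tendsto_nhds.mp (hpt (p i) (hpmem i hi')) (ε/4) (by linarith)
  filter_upwards [hev] with n hn x hx
  set i : ℕ := ⌊(x - c) / δ⌋₊ with hi
  have hxc : 0 ≤ x - c := by linarith [hx.1]
  have hiN : i ≤ N := by
    have h1 : (x - c) / δ ≤ N := by
      rw [div_le_iff₀ hδpos]
      have hNδ : (N:ℝ) * δ = d - c := by rw [hδdef]; field_simp [show (N:ℝ) ≠ 0 by exact_mod_cast hNpos.ne']
      linarith [hx.2]
    calc i ≤ ⌊(N:ℝ)⌋₊ := Nat.floor_le_floor h1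
    _ = N := Nat.floor_natCast N
  have hfl1 : (i:ℝ) * δ ≤ x - c := by
    have := Nat.floor_le (a := (x - c)/δ) (by positivity)
    rw [← hi] at this
    calc (i:ℝ) * δ ≤ ((x - c)/δ) * δ := by nlinarith
    _ = x - c := by field_simp
  have hfl2 : x - c < (i + 1 : ℝ) * δ := by
    have := Nat.lt_succ_floor ((x - c)/δ)
    have h2 : (x - c)/δ < (i:ℝ) + 1 := by
      rw [hi]; push_cast at this ⊢; exact_mod_cast this
    calc x - c = ((x - c)/δ) * δ := by field_simp
    _ < ((i:ℝ) + 1) * δ := by nlinarith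
  have hpix : |x - p i| ≤ δ := by
    rw [abs_le]; simp only [hp]; constructor <;> nlinarith
  have hpiI : p i ∈ Icc c d := hpmem i hiN
  have t1 : ‖F n x - F n (p i)‖ ≤ K * δ := by
    have := hlip n (p i) hpiI x hx
    have h3 : K * |x - p i| ≤ K * δ := by nlinarith
    linarith
  have t2 : ‖G x - G (p i)‖ ≤ K * δ := by
    have := hGlip (p i) hpiI x hx
    have h3 : K * |x - p i| ≤ K * δ := by nlinarith
    linarith
  have t3 : dist (F n (p i)) (G (p i)) < ε/4 := hn i (Finset.mem_range.mpr (by omega))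
  have hKδ : K * δ < ε / 4 := hNsmall
  calc dist (G x) (F n x) ≤ dist (G x) (G (p i)) + dist (G (p i)) (F n (p i))
        + dist (F n (p i)) (F n x) := dist_triangle4 _ _ _ _
  _ < K * δ + ε/4 + K * δ := by
      have a1 : dist (G x) (G (p i)) ≤ K * δ := by rw [dist_eq_norm]; exact t2
      have a2 : dist (G (p i)) (F n (p i)) < ε/4 := by rw [dist_comm]; exact t3
      have a3 : dist (F n (p i)) (F n x) ≤ K * δ := by
        rw [dist_eq_norm, norm_sub_rev]; exact t1
      linarith
  _ < ε := by linarith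

end aux

/-- A sequence of pairwise disjoint `C²(b)`-curves (arc length parametrized,
tangent slopes `≤ √b`, curvature `≤ √b`) converging pointwise converges uniformly
in `C¹`, and the limit is a `C¹` curve with tangent slopes everywhere `≤ √b`. -/
theorem pointwise_limit_of_disjoint_C2b_curves_is_C1
    (b c d : ℝ) (hb : 0 < b) (hcd : c < d)
    (γ : ℕ → ℝ → EuclideanSpace ℝ (Fin 2)) (γlim : ℝ → EuclideanSpace ℝ (Fin 2))
    (hsmooth : ∀ n, ContDiff ℝ 2 (γ n))
    (harc : ∀ n, ∀ s ∈ Icc c d, ‖deriv (γ n) s‖ = 1)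
    (hslope : ∀ n, ∀ s ∈ Icc c d,
      |(deriv (γ n) s) 1| ≤ Real.sqrt b * |(deriv (γ n) s) 0|)
    (hcurv : ∀ n, ∀ s ∈ Icc c d, ‖deriv (deriv (γ n)) s‖ ≤ Real.sqrt b)
    (hdisj : ∀ m n, m ≠ n → ∀ s ∈ Icc c d, ∀ t ∈ Icc c d, γ m s ≠ γ n t)
    (hptwise : ∀ s ∈ Icc c d, Tendsto (fun n => γ n s) atTop (nhds (γlim s))) :
    TendstoUniformlyOn γ γlim atTop (Icc c d)
    ∧ ∃ g : ℝ → EuclideanSpace ℝ (Fin 2),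
        TendstoUniformlyOn (fun n => deriv (γ n)) g atTop (Icc c d)
        ∧ ContinuousOn g (Icc c d)
        ∧ (∀ s ∈ Icc c d, HasDerivWithinAt γlim (g s) (Icc c d) s)
        ∧ ∀ s ∈ Icc c d, |(g s) 1| ≤ Real.sqrt b * |(g s) 0| := by

  have hdc : (0:ℝ) < d - c := by linarith
  have hsb : 0 ≤ Real.sqrt b := Real.sqrt_nonneg b
  -- basic differentiability facts
  have hdiff : ∀ n, Differentiable ℝ (γ n) := fun n => (hsmooth n).differentiable (by norm_num)
  have hC1 : ∀ n, ContDiff ℝ 1 (deriv (γ n)) := by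
    intro n
    have h2 : ContDiff ℝ (1+1 : ℕ) (γ n) := by exact_mod_cast hsmooth n
    exact (contDiff_succ_iff_deriv.mp (by exact_mod_cast h2)).2.2
  have hdiff' : ∀ n, Differentiable ℝ (deriv (γ n)) := fun n => (hC1 n).differentiable (by norm_num)
  have hcont' : ∀ n, Continuous (deriv (γ n)) := fun n => (hC1 n).continuous
  -- Lipschitz bounds
  have hlip0 : ∀ n, ∀ x ∈ Icc c d, ∀ y ∈ Icc c d, ‖γ n y - γ n x‖ ≤ 1 * |y - x| :=
    fun n => aux_lip (convex_Icc c d) (hdiff n) (fun x hx => le_of_eq (harc n x hx))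
  have hlip1 : ∀ n, ∀ x ∈ Icc c d, ∀ y ∈ Icc c d,
      ‖deriv (γ n) y - deriv (γ n) x‖ ≤ Real.sqrt b * |y - x| :=
    fun n => aux_lip (convex_Icc c d) (hdiff' n) (hcurv n)
  -- pointwise Cauchy of the derivatives, via the Landau-type estimate
  have hcauchy : ∀ s ∈ Icc c d, CauchySeq (fun n => deriv (γ n) s) := by
    intro s hs
    rw [Metric.cauchySeq_iff]
    intro ε hε
    set ℓ : ℝ := min ((d - c)/2) (ε / (4 * Real.sqrt b + 1)) with hℓdef
    have hℓpos : 0 < ℓ := lt_min (by linarith) (by positivity)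
    have hℓ1 : 2 * ℓ ≤ d - c := by
      have := min_le_left ((d - c)/2) (ε / (4 * Real.sqrt b + 1)); rw [← hℓdef] at this
      linarith
    have hℓ2 : 2 * Real.sqrt b * ℓ ≤ ε / 2 := by
      have h1 : ℓ ≤ ε / (4 * Real.sqrt b + 1) := min_le_right _ _
      have h2 : 2 * Real.sqrt b * ℓ ≤ 2 * Real.sqrt b * (ε / (4 * Real.sqrt b + 1)) :=
        mul_le_mul_of_nonneg_left h1 (by positivity)
      have h3 : 2 * Real.sqrt b * (ε / (4 * Real.sqrt b + 1)) ≤ ε / 2 := by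
        have h5 : 0 < 4 * Real.sqrt b + 1 := by positivity
        have h4 : 2 * Real.sqrt b * (ε / (4 * Real.sqrt b + 1)) * (4 * Real.sqrt b + 1)
            = 2 * Real.sqrt b * ε := by field_simp
        nlinarith [h4, h5]
      linarith
    obtain ⟨hcs, hsd⟩ := hs
    set t : ℝ := if s + ℓ ≤ d then s + ℓ else s - ℓ with htdef
    have htprop : t ∈ Icc c d ∧ |t - s| = ℓ := by
      rw [htdef]; split_ifs with h
      · exact ⟨⟨by linarith, h⟩, by rw [add_sub_cancel_left]; exact abs_of_pos hℓpos⟩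
      · push_neg at h
        refine ⟨⟨by linarith, by linarith⟩, ?_⟩
        rw [show s - ℓ - s = -ℓ by ring, abs_neg]; exact abs_of_pos hℓpos
    obtain ⟨htI, htd⟩ := htprop
    -- Cauchy-ness of the values at s and t
    have hC_s := Metric.cauchySeq_iff.mp (hptwise s ⟨hcs, hsd⟩).cauchySeq (ε * ℓ / 8)
      (by positivity)
    have hC_t := Metric.cauchySeq_iff.mp (hptwise t htI).cauchySeq (ε * ℓ / 8) (by positivity)
    obtain ⟨N₁, hN₁⟩ := hC_s
    obtain ⟨N₂, hN₂⟩ := hC_t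
    refine ⟨max N₁ N₂, fun m hm n hn => ?_⟩
    have hm₁ := le_of_max_le_left hm
    have hm₂ := le_of_max_le_right hm
    have hn₁ := le_of_max_le_left hn
    have hn₂ := le_of_max_le_right hn
    set h : ℝ → EuclideanSpace ℝ (Fin 2) := fun x => γ m x - γ n x with hhdef
    set h' : ℝ → EuclideanSpace ℝ (Fin 2) := fun x => deriv (γ m) x - deriv (γ n) x with hh'def
    have hd : ∀ x, HasDerivAt h (h' x) x := fun x =>
      ((hdiff m x).hasDerivAt.sub (hdiff n x).hasDerivAt)
    have hlh' : ∀ x ∈ Icc c d, ∀ y ∈ Icc c d, ‖h' y - h' x‖ ≤ (2 * Real.sqrt b) * |y - x| := by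
      intro x hx y hy
      have e1 : h' y - h' x = (deriv (γ m) y - deriv (γ m) x) - (deriv (γ n) y - deriv (γ n) x) := by
        rw [hh'def]; exact sub_sub_sub_comm _ _ _ _
      rw [e1]
      calc ‖(deriv (γ m) y - deriv (γ m) x) - (deriv (γ n) y - deriv (γ n) x)‖
          ≤ ‖deriv (γ m) y - deriv (γ m) x‖ + ‖deriv (γ n) y - deriv (γ n) x‖ := norm_sub_le _ _
      _ ≤ Real.sqrt b * |y - x| + Real.sqrt b * |y - x| := by
          have := hlip1 m x hx y hy
          have := hlip1 n x hx y hy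
          linarith
      _ = (2 * Real.sqrt b) * |y - x| := by ring
    have htay := aux_taylor (by positivity) hd hlh' ⟨hcs, hsd⟩ htI
    rw [htd] at htay
    have hsmul : ‖(t - s) • h' s‖ = ℓ * ‖h' s‖ := by
      rw [norm_smul, Real.norm_eq_abs, htd]
    have hht : ‖h t‖ < ε * ℓ / 8 := by
      have := hN₂ m hm₂ n hn₂
      rw [dist_eq_norm] at this
      exact this
    have hhs : ‖h s‖ < ε * ℓ / 8 := by
      have := hN₁ m hm₁ n hn₁
      rw [dist_eq_norm] at this
      exact this
    have key : ℓ * ‖h' s‖ ≤ 2 * Real.sqrt b * ℓ * ℓ + (‖h t‖ + ‖h s‖) := by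
      calc ℓ * ‖h' s‖ = ‖(t - s) • h' s‖ := hsmul.symm
      _ ≤ ‖h t - h s - (t - s) • h' s‖ + ‖h t - h s‖ := by
          have := norm_sub_le (h t - h s - (t - s) • h' s) (h t - h s)
          have e : (h t - h s - (t - s) • h' s) - (h t - h s) = -((t - s) • h' s) := by abel
          rw [e, norm_neg] at this
          linarith
      _ ≤ 2 * Real.sqrt b * ℓ * ℓ + (‖h t‖ + ‖h s‖) := by
          have := norm_sub_le (h t) (h s)
          linarith [htay]
    have hfin : ‖h' s‖ < ε := by
      nlinarith [norm_nonneg (h' s)]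
    rw [dist_eq_norm]
    exact hfin
  -- pointwise limit of derivatives
  have hex : ∀ s, s ∈ Icc c d → ∃ v, Tendsto (fun n => deriv (γ n) s) atTop (nhds v) :=
    fun s hs => cauchySeq_tendsto_of_complete (hcauchy s hs)
  choose! g₀ hg₀ using hex
  -- uniform convergence
  have hunifγ : TendstoUniformlyOn γ γlim atTop (Icc c d) :=
    aux_unif hcd zero_le_one hlip0 hptwise
  have hunifd : TendstoUniformlyOn (fun n => deriv (γ n)) g₀ atTop (Icc c d) :=
    aux_unif hcd hsb hlip1 hg₀
  have hg₀cont : ContinuousOn g₀ (Icc c d) :=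
    hunifd.continuousOn (Eventually.of_forall fun n => (hcont' n).continuousOn).frequently
  -- clamped version of g₀
  set π : ℝ → ℝ := fun x => max c (min d x) with hπdef
  have hπcont : Continuous π := continuous_const.max (continuous_const.min continuous_id)
  have hπmem : ∀ x, π x ∈ Icc c d := fun x => ⟨le_max_left _ _, max_le hcd.le (min_le_left _ _)⟩
  have hπid : ∀ x ∈ Icc c d, π x = x := by
    intro x hx
    rw [hπdef]
    simp only
    rw [min_eq_right hx.2, max_eq_right hx.1]
  set g : ℝ → EuclideanSpace ℝ (Fin 2) := fun x => g₀ (π x) with hgdef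
  have hgI : ∀ x ∈ Icc c d, g x = g₀ x := fun x hx => by rw [hgdef]; simp only; rw [hπid x hx]
  have hgcont : Continuous g := hg₀cont.comp_continuous hπcont hπmem
  have hunifg : TendstoUniformlyOn (fun n => deriv (γ n)) g atTop (Icc c d) :=
    hunifd.congr_right (fun x hx => (hgI x hx).symm)
  refine ⟨hunifγ, g, hunifg, hgcont.continuousOn, ?_, ?_⟩
  · -- the derivative of the limit
    have hgint : ∀ a b : ℝ, IntervalIntegrable g MeasureTheory.volume a b :=
      fun a b => hgcont.intervalIntegrable a b
    have key : ∀ t ∈ Icc c d, γlim t = γlim c + ∫ x in c..t, g x := by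
      intro t ht
      have h1 : ∀ n, γ n t - γ n c = ∫ x in c..t, deriv (γ n) x := fun n =>
        (intervalIntegral.integral_deriv_eq_sub (fun x _ => (hdiff n x))
          ((hcont' n).intervalIntegrable c t)).symm
      have h2 : Tendsto (fun n => ∫ x in c..t, deriv (γ n) x) atTop
          (nhds (∫ x in c..t, g x)) := by
        rw [Metric.tendsto_nhds]
        intro ε hε
        have hε' : 0 < ε / (d - c + 1) := by positivity
        filter_upwards [Metric.tendstoUniformlyOn_iff.mp hunifg (ε / (d - c + 1)) hε']
          with n hn
        have hsub : Set.uIoc c t ⊆ Icc c d := by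
          rw [Set.uIoc_of_le ht.1]
          exact fun x hx => ⟨le_of_lt hx.1, hx.2.trans ht.2⟩
        have hbd : ∀ x ∈ Set.uIoc c t, ‖deriv (γ n) x - g x‖ ≤ ε / (d - c + 1) := by
          intro x hx
          have := hn x (hsub hx)
          rw [dist_comm, dist_eq_norm] at this
          exact this.le
        have e1 : (∫ x in c..t, deriv (γ n) x) - ∫ x in c..t, g x
            = ∫ x in c..t, (deriv (γ n) x - g x) :=
          (intervalIntegral.integral_sub ((hcont' n).intervalIntegrable c t) (hgint c t)).symm
        rw [dist_eq_norm, e1]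
        have e2 := intervalIntegral.norm_integral_le_of_norm_le_const hbd
        have e3 : |t - c| ≤ d - c := by
          rw [abs_of_nonneg (by linarith [ht.1])]
          linarith [ht.2]
        calc ‖∫ x in c..t, (deriv (γ n) x - g x)‖ ≤ ε / (d - c + 1) * |t - c| := e2
        _ ≤ ε / (d - c + 1) * (d - c) := by nlinarith
        _ < ε := by
            rw [div_mul_eq_mul_div, div_lt_iff₀ (by linarith)]
            nlinarith
      have h3 : Tendsto (fun n => γ n t - γ n c) atTop (nhds (γlim t - γlim c)) :=
        (hptwise t ht).sub (hptwise c ⟨le_refl c, hcd.le⟩)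
      have h3' : Tendsto (fun n => ∫ x in c..t, deriv (γ n) x) atTop
          (nhds (γlim t - γlim c)) := h3.congr h1
      have h4 : γlim t - γlim c = ∫ x in c..t, g x := tendsto_nhds_unique h3' h2
      rw [← h4]; abel
    intro s hs
    have hF : HasDerivAt (fun t => γlim c + ∫ x in c..t, g x) (g s) s := by
      refine HasDerivAt.const_add _ ?_
      exact intervalIntegral.integral_hasDerivAt_right (hgint c s)
        (hgcont.stronglyMeasurableAtFilter _ _) hgcont.continuousAt
    exact (hF.hasDerivWithinAt).congr (fun x hx => key x hx) (key s hs)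
  · -- the slope bound
    intro s hs
    rw [hgI s hs]
    have ht := hg₀ s hs
    have ht1 : Tendsto (fun n => |(deriv (γ n) s) 1|) atTop (nhds |(g₀ s) 1|) :=
      (((EuclideanSpace.proj (1 : Fin 2)).continuous.tendsto _).comp ht).abs
    have ht0 : Tendsto (fun n => Real.sqrt b * |(deriv (γ n) s) 0|) atTop
        (nhds (Real.sqrt b * |(g₀ s) 0|)) :=
      ((((EuclideanSpace.proj (0 : Fin 2)).continuous.tendsto _).comp ht).abs).const_mul _
    exact le_of_tendsto_of_tendsto' ht1 ht0 (fun n => hslope n s hs)
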